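/- Let X be a smooth projective variety and D an integral effective divisor on X. Then H^0(X, D) = H^0(X, D − ⌈N_σ(D)⌉), i.e., every effective divisor linearly equivalent to D contains the roundup of the negative part N_σ(D) of the Nakayama–Zariski decomposition of D. -/

import Mathlib

/-- `σ_Γ(D) = inf { mult_Γ D' : 0 ≤ D' ∼_ℝ D }`; R-linear equivalence is modeled by the
submodule `P` of principal R-divisors. -/
noncomputable def sigmaG {ι : Type*} (P : Submodule ℝ (ι → ℝ)) (Γ : ι) (D : ι → ℝ) : ℝ :=
  ⨅ D' : {D' : ι → ℝ // (∀ i, 0 ≤ D' i) ∧ D' - D ∈ P}, (D' : ι → ℝ) Γ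

open Filter Topology

/-- Lemma 2.5(2). Let `D` be an integral effective divisor on a smooth
projective variety. Then `H⁰(X, D) = H⁰(X, D − ⌈N_σ(D)⌉)`: every effective divisor `G`
(integrally) linearly equivalent to `D` contains the roundup of the negative part
`N_σ(D)` of the Nakayama–Zariski decomposition.  Here `N_σ(D)` has coefficients
`N Γ = lim_{ε→0⁺} σ_Γ(D + εA)` for an ample divisor `A`; integral linear equivalence is
modeled by the subgroup `PZ` of integral principal divisors, compatibly with `P`. -/
theorem stmt3 {ι : Type*} (P : Submodule ℝ (ι → ℝ))
    (PZ : AddSubgroup (ι → ℤ))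
    (hPZ : ∀ v ∈ PZ, (fun i => ((v i : ℝ))) ∈ P)
    (AmpR : (ι → ℝ) → Prop) (A : ι → ℝ) (hA : AmpR A)
    (D : ι → ℤ) (hD : ∀ i, 0 ≤ D i)
    (N : ι → ℝ)
    (hN : ∀ Γ : ι, Filter.Tendsto
      (fun ε : ℝ => sigmaG P Γ ((fun i => ((D i : ℝ))) + ε • A))
      (nhdsWithin 0 (Set.Ioi 0)) (nhds (N Γ))) :
    ∀ G : ι → ℤ, (∀ i, 0 ≤ G i) → G - D ∈ PZ → ∀ i, ⌈N i⌉ ≤ G i := by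
  intro G hG hGD i
  set Dr : ι → ℝ := fun j => ((D j : ℝ)) with hDr
  set Gr : ι → ℝ := fun j => ((G j : ℝ)) with hGr
  have hGP : Gr - Dr ∈ P := by
    have h := hPZ _ hGD
    have : (fun j => (((G - D) j : ℝ))) = Gr - Dr := by
      funext j; simp [Gr, Dr]
    rwa [this] at h
  rw [Int.ceil_le]
  show N i ≤ (G i : ℝ)
  by_cases hS : ∃ ε0 : ℝ, 0 < ε0 ∧
      Nonempty {D' : ι → ℝ // (∀ j, 0 ≤ D' j) ∧ D' - (Dr + ε0 • A) ∈ P}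
  · obtain ⟨ε0, hε0, ⟨D0, hD0pos, hD0mem⟩⟩ := hS
    have key : ∀ t : ℝ, 0 < t → t ≤ 1 →
        sigmaG P i (Dr + (t * ε0) • A) ≤ t * D0 i + (1 - t) * Gr i := by
      intro t ht ht1
      have hmem : (t • D0 + (1 - t) • Gr) - (Dr + (t * ε0) • A)
          = t • (D0 - (Dr + ε0 • A)) + (1 - t) • (Gr - Dr) := by
        funext j
        simp [Pi.add_apply, Pi.sub_apply, Pi.smul_apply, smul_eq_mul]
        ring
      have hin : (t • D0 + (1 - t) • Gr) - (Dr + (t * ε0) • A) ∈ P := by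
        rw [hmem]
        exact P.add_mem (P.smul_mem t hD0mem) (P.smul_mem (1 - t) hGP)
      have hpos : ∀ j, 0 ≤ (t • D0 + (1 - t) • Gr) j := by
        intro j
        have := hD0pos j
        have hg : (0 : ℝ) ≤ Gr j := by
          simp only [Gr]; exact_mod_cast hG j
        have : 0 ≤ t * D0 j := mul_nonneg ht.le (hD0pos j)
        have : 0 ≤ (1 - t) * Gr j := mul_nonneg (by linarith) hg
        simp only [Pi.add_apply, Pi.smul_apply, smul_eq_mul]
        nlinarith [mul_nonneg ht.le (hD0pos j)]
      have hbdd : BddBelow (Set.range fun D' :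
          {D' : ι → ℝ // (∀ j, 0 ≤ D' j) ∧ D' - (Dr + (t * ε0) • A) ∈ P} =>
          (D' : ι → ℝ) i) := by
        refine ⟨0, ?_⟩
        rintro x ⟨D', rfl⟩
        exact D'.2.1 i
      have := ciInf_le hbdd (⟨t • D0 + (1 - t) • Gr, hpos, hin⟩ :
          {D' : ι → ℝ // (∀ j, 0 ≤ D' j) ∧ D' - (Dr + (t * ε0) • A) ∈ P})
      simpa [sigmaG, Pi.add_apply, Pi.smul_apply, smul_eq_mul] using this
    -- tendsto of reparametrized family
    have hmap : Tendsto (fun t : ℝ => t * ε0) (𝓝[>] 0) (𝓝[>] 0) := by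
      apply tendsto_nhdsWithin_of_tendsto_nhds_of_eventually_within
      · have : Tendsto (fun t : ℝ => t * ε0) (𝓝 0) (𝓝 (0 * ε0)) :=
          (continuous_id.mul continuous_const).tendsto 0
        simpa using this.mono_left nhdsWithin_le_nhds
      · filter_upwards [self_mem_nhdsWithin] with t ht
        exact Set.mem_Ioi.mpr (mul_pos ht hε0)
    have h1 : Tendsto (fun t : ℝ => sigmaG P i (Dr + (t * ε0) • A)) (𝓝[>] 0)
        (𝓝 (N i)) := (hN i).comp hmap
    have h2 : Tendsto (fun t : ℝ => t * D0 i + (1 - t) * Gr i) (𝓝[>] 0)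
        (𝓝 (Gr i)) := by
      have : Tendsto (fun t : ℝ => t * D0 i + (1 - t) * Gr i) (𝓝 0)
          (𝓝 (0 * D0 i + (1 - 0) * Gr i)) := by
        apply Tendsto.add
        · exact (continuous_id.mul continuous_const).tendsto 0
        · exact ((continuous_const.sub continuous_id).mul continuous_const).tendsto 0
      simpa using this.mono_left nhdsWithin_le_nhds
    have hle : N i ≤ Gr i := by
      refine le_of_tendsto_of_tendsto h1 h2 ?_
      filter_upwards [Ioo_mem_nhdsGT_of_mem (Set.left_mem_Ico.mpr one_pos)] with t ht
      exact key t ht.1 ht.2.le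
    exact hle
  · push_neg at hS
    have hz : ∀ᶠ ε in 𝓝[>] (0:ℝ), sigmaG P i (Dr + ε • A) = 0 := by
      filter_upwards [self_mem_nhdsWithin] with ε hε
      have hemp : IsEmpty {D' : ι → ℝ // (∀ j, 0 ≤ D' j) ∧ D' - (Dr + ε • A) ∈ P} := by
        rcases isEmpty_or_nonempty {D' : ι → ℝ // (∀ j, 0 ≤ D' j) ∧ D' - (Dr + ε • A) ∈ P}
          with h | h
        · exact h
        · exact absurd h (not_nonempty_iff.mpr (hS ε hε))
      simp [sigmaG, Real.iInf_of_isEmpty]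
    have hN0 : N i = 0 := by
      have : Tendsto (fun ε : ℝ => sigmaG P i (Dr + ε • A)) (𝓝[>] 0) (𝓝 0) := by
        exact Tendsto.congr' (by filter_upwards [hz] with ε h; exact h.symm) tendsto_const_nhds
      exact tendsto_nhds_unique (hN i) this
    rw [hN0]
    exact_mod_cast hG i
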